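/- (Johnson-type bound for light codes) L(W,n,w) ≤ ⌊(n/w)·L(W,n−1,w−1)⌋, where L(W,n,w) is the maximum number of vertices of the Johnson graph J(n,w) that can be made W-light under a single orientation. -/

import Mathlib

def weight {n : ℕ} (B : Fin n → Bool) : ℕ :=
  (Finset.univ.filter (fun i => B i = true)).card

def hamming {n : ℕ} (B B' : Fin n → Bool) : ℕ :=
  (Finset.univ.filter (fun i => B i ≠ B' i)).card

theorem hamming_comm {n : ℕ} (B B' : Fin n → Bool) : hamming B B' = hamming B' B := by
  unfold hamming; congr 1; ext i; simp [ne_comm]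

def johnson (n w : ℕ) : SimpleGraph {B : Fin n → Bool // weight B = w} where
  Adj B B' := hamming B.1 B'.1 = 2
  symm := ⟨fun B B' h => (hamming_comm _ _).trans h⟩
  loopless := ⟨fun B h => by simp [hamming] at h⟩

structure GraphOrientation {V : Type*} (G : SimpleGraph V) where
  dir : V → V → Prop
  dir_adj : ∀ u v, dir u v → G.Adj u v
  total : ∀ u v, G.Adj u v → dir u v ∨ dir v u
  asymm : ∀ u v, dir u v → ¬ dir v u

noncomputable def outdeg {V : Type*} {G : SimpleGraph V} (Λ : GraphOrientation G) (v : V) : ℕ :=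
  {u | Λ.dir v u}.ncard

noncomputable def Lmax (W n w : ℕ) : ℕ :=
  sSup {k | ∃ Λ : GraphOrientation (johnson n w), k = {B | outdeg Λ B ≤ W}.ncard}

/-! ### Auxiliary material -/

open Finset

lemma weight_eq_sum {n : ℕ} (B : Fin n → Bool) :
    weight B = ∑ j, if B j = true then 1 else 0 := Finset.card_filter _ _

lemma weight_insertNth {m : ℕ} (i : Fin (m + 1)) (C : Fin m → Bool) :
    weight (i.insertNth true C) = weight C + 1 := by
  rw [weight_eq_sum, weight_eq_sum, Fin.sum_univ_succAbove _ i]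
  simp [add_comm]

lemma hamming_insertNth {m : ℕ} (i : Fin (m + 1)) (C C' : Fin m → Bool) :
    hamming (i.insertNth true C) (i.insertNth true C') = hamming C C' := by
  unfold hamming
  rw [Finset.card_filter, Finset.card_filter, Fin.sum_univ_succAbove _ i]
  simp

/-- Pull back an orientation along a graph homomorphism-like map. -/
def pullOrient {V V' : Type*} {G : SimpleGraph V} {G' : SimpleGraph V'}
    (f : V' → V) (hf : ∀ u v, G'.Adj u v → G.Adj (f u) (f v))
    (Λ : GraphOrientation G) : GraphOrientation G' where
  dir u v := G'.Adj u v ∧ Λ.dir (f u) (f v)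
  dir_adj _ _ h := h.1
  total u v h := by
    rcases Λ.total _ _ (hf u v h) with h1 | h1
    · exact Or.inl ⟨h, h1⟩
    · exact Or.inr ⟨h.symm, h1⟩
  asymm u v h h' := Λ.asymm _ _ h.2 h'.2

lemma outdeg_pull_le {V V' : Type*} [Finite V] {G : SimpleGraph V} {G' : SimpleGraph V'}
    (f : V' → V) (hf : ∀ u v, G'.Adj u v → G.Adj (f u) (f v))
    (hinj : Function.Injective f) (Λ : GraphOrientation G) (u : V') :
    outdeg (pullOrient f hf Λ) u ≤ outdeg Λ (f u) := by
  unfold outdeg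
  have h1 : f '' {x | (pullOrient f hf Λ).dir u x} ⊆ {x | Λ.dir (f u) x} := by
    rintro _ ⟨x, hx, rfl⟩; exact hx.2
  calc {x | (pullOrient f hf Λ).dir u x}.ncard
      = (f '' {x | (pullOrient f hf Λ).dir u x}).ncard :=
        (Set.ncard_image_of_injective _ hinj).symm
    _ ≤ _ := Set.ncard_le_ncard h1 (Set.toFinite _)

lemma bddAbove_Lmax_set (W n w : ℕ) :
    BddAbove {k | ∃ Λ : GraphOrientation (johnson n w), k = {B | outdeg Λ B ≤ W}.ncard} := by
  refine ⟨(Set.univ : Set {B : Fin n → Bool // weight B = w}).ncard, ?_⟩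
  rintro k ⟨Λ, rfl⟩
  exact Set.ncard_le_ncard (Set.subset_univ _) Set.finite_univ

lemma Lmax_ge (W n w : ℕ) (Λ : GraphOrientation (johnson n w)) :
    {B | outdeg Λ B ≤ W}.ncard ≤ Lmax W n w :=
  le_csSup (bddAbove_Lmax_set W n w) ⟨Λ, rfl⟩

theorem stmt10 (W n w : ℕ) (hw : 0 < w) :
    Lmax W n w ≤ n * Lmax W (n - 1) (w - 1) / w := by
  classical
  obtain ⟨v, rfl⟩ : ∃ v, w = v + 1 := ⟨w - 1, (Nat.succ_pred_eq_of_pos hw).symm⟩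
  simp only [Nat.add_sub_cancel]
  refine csSup_le' ?_
  rintro k ⟨Λ, rfl⟩
  rw [Nat.le_div_iff_mul_le hw]
  cases n with
  | zero =>
      have hempty : IsEmpty {B : Fin 0 → Bool // weight B = v + 1} := by
        refine ⟨fun B => ?_⟩
        have := B.2
        simp [weight] at this
      rw [Set.eq_empty_of_isEmpty {B | outdeg Λ B ≤ W}]
      simp
  | succ m =>
      simp only [Nat.add_sub_cancel]
      set V := {B : Fin (m + 1) → Bool // weight B = v + 1} with hV
      set V' := {C : Fin m → Bool // weight C = v} with hV'
      let L : Finset V := univ.filter (fun B => outdeg Λ B ≤ W)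
      have hk : {B | outdeg Λ B ≤ W}.ncard = L.card := by
        rw [Set.ncard_eq_toFinset_card']
        congr 1
        ext B
        simp [L]
      -- per-coordinate bound
      have hcoord : ∀ i : Fin (m + 1),
          (L.filter (fun B => B.1 i = true)).card ≤ Lmax W m v := by
        intro i
        set f : V' → V := fun C => ⟨i.insertNth true C.1, by
          rw [weight_insertNth, C.2]⟩ with hf
        have hfinj : Function.Injective f := by
          intro C C' h
          have h2 := congrArg (fun B : V => i.removeNth B.1) h
          simp only [hf, Fin.removeNth_insertNth] at h2
          exact Subtype.ext h2
        have hfadj : ∀ u u', (johnson m v).Adj u u' → (johnson (m + 1) (v + 1)).Adj (f u) (f u') := by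
          intro u u' h
          show hamming _ _ = 2
          rw [hamming_insertNth]
          exact h
        set Λ' := pullOrient f hfadj Λ with hΛ'
        set S' : Set V' := {C | outdeg Λ' C ≤ W} with hS'
        have hle : (L.filter (fun B => B.1 i = true)).card ≤ S'.toFinset.card := by
          have hsub : L.filter (fun B => B.1 i = true) ⊆ S'.toFinset.image f := by
            intro B hB
            rw [Finset.mem_filter] at hB
            obtain ⟨hBL, hBi⟩ := hB
            have hBrec : i.insertNth true (i.removeNth B.1) = B.1 := by
              conv_rhs => rw [← Fin.insertNth_self_removeNth i B.1]
              rw [hBi]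
            have hwC : weight (i.removeNth B.1) = v := by
              have h2 := B.2
              rw [← hBrec, weight_insertNth] at h2
              omega
            set C : V' := ⟨i.removeNth B.1, hwC⟩ with hC
            have hfC : f C = B := Subtype.ext hBrec
            refine Finset.mem_image.2 ⟨C, ?_, hfC⟩
            rw [Set.mem_toFinset]
            show outdeg Λ' C ≤ W
            have h3 := outdeg_pull_le f hfadj hfinj Λ C
            rw [hfC] at h3
            exact h3.trans (by simpa [L] using hBL)
          calc (L.filter (fun B => B.1 i = true)).card ≤ (S'.toFinset.image f).card :=
                Finset.card_le_card hsub
            _ ≤ S'.toFinset.card := Finset.card_image_le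
        have : S'.toFinset.card = S'.ncard := (Set.ncard_eq_toFinset_card' _).symm
        rw [this] at hle
        exact hle.trans (Lmax_ge W m v Λ')
      -- double counting
      have hsum : ∑ i : Fin (m + 1), (L.filter (fun B => B.1 i = true)).card
          = L.card * (v + 1) := by
        simp_rw [Finset.card_filter]
        rw [Finset.sum_comm]
        have : ∀ B ∈ L, (∑ i : Fin (m + 1), if B.1 i = true then 1 else 0) = v + 1 := by
          intro B _
          rw [← weight_eq_sum, B.2]
        rw [Finset.sum_congr rfl this, Finset.sum_const, smul_eq_mul, mul_comm]
      calc {B | outdeg Λ B ≤ W}.ncard * (v + 1) = L.card * (v + 1) := by rw [hk]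
        _ = ∑ i : Fin (m + 1), (L.filter (fun B => B.1 i = true)).card := hsum.symm
        _ ≤ ∑ _i : Fin (m + 1), Lmax W m v := Finset.sum_le_sum (fun i _ => hcoord i)
        _ = (m + 1) * Lmax W m v := by
            rw [Finset.sum_const, smul_eq_mul, Finset.card_univ, Fintype.card_fin]
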